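/- For a compact Hausdorff space X and an open subset U ⊆ X, one has I(X \ U) = I(X) \ S_I(U); consequently S_I(U) is open in I(X). -/

import Mathlib

open scoped BigOperators

/-- An idempotent probability measure: normality on constants, max-plus homogeneity
(addition of constants), and max-additivity (pointwise max ↦ max). -/
def IsIdemProb {X : Type*} [TopologicalSpace X] (μ : C(X, ℝ) → ℝ) : Prop :=
  (∀ c : ℝ, μ (ContinuousMap.const X c) = c) ∧
  (∀ (c : ℝ) (φ : C(X, ℝ)), μ (ContinuousMap.const X c + φ) = c + μ φ) ∧
  (∀ φ ψ : C(X, ℝ), μ (φ ⊔ ψ) = max (μ φ) (μ ψ))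

/-- The support of a functional μ : the intersection of all closed sets F such that
μ φ depends only on φ|_F. -/
def suppI {X : Type*} [TopologicalSpace X] (μ : C(X, ℝ) → ℝ) : Set X :=
  ⋂₀ {F : Set X | IsClosed F ∧ ∀ φ ψ : C(X, ℝ), (∀ x ∈ F, φ x = ψ x) → μ φ = μ ψ}

/-- The space I(X) of idempotent probability measures with the topology of
pointwise convergence. -/
abbrev IPM (X : Type*) [TopologicalSpace X] : Type _ :=
  {μ : C(X, ℝ) → ℝ // IsIdemProb μ}

/-- S_I(A) = {μ ∈ I(X) : supp μ ∩ A ≠ ∅}. -/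
def SI {X : Type*} [TopologicalSpace X] (A : Set X) : Set (IPM X) :=
  {μ | (suppI μ.1 ∩ A).Nonempty}

section Aux

variable {X : Type*} [TopologicalSpace X]

/-- `ν` depends only on values on `F`. -/
def DepOn (ν : C(X, ℝ) → ℝ) (F : Set X) : Prop :=
  ∀ φ ψ : C(X, ℝ), (∀ x ∈ F, φ x = ψ x) → ν φ = ν ψ

lemma suppI_eq (ν : C(X, ℝ) → ℝ) :
    suppI ν = ⋂₀ {F : Set X | IsClosed F ∧ DepOn ν F} := rfl

lemma depOn_univ (ν : C(X, ℝ) → ℝ) : DepOn ν Set.univ := by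
  intro φ ψ h
  have : φ = ψ := ContinuousMap.ext fun x => h x trivial
  rw [this]

lemma depOn_mono {ν : C(X, ℝ) → ℝ} {F G : Set X} (hFG : F ⊆ G) (h : DepOn ν F) :
    DepOn ν G := fun φ ψ hφψ => h φ ψ fun x hx => hφψ x (hFG hx)

/-- Gluing: a continuous map equal to φ on F₁ and ψ on F₂, when φ = ψ on F₁ ∩ F₂. -/
lemma exists_glue [NormalSpace X] {F₁ F₂ : Set X} (h₁ : IsClosed F₁) (h₂ : IsClosed F₂)
    (φ ψ : C(X, ℝ)) (h : ∀ x ∈ F₁ ∩ F₂, φ x = ψ x) :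
    ∃ χ : C(X, ℝ), (∀ x ∈ F₁, χ x = φ x) ∧ ∀ x ∈ F₂, χ x = ψ x := by
  classical
  set s : Set ↥(F₁ ∪ F₂) := Subtype.val ⁻¹' F₁ with hs
  have hsc : IsClosed s := h₁.preimage continuous_subtype_val
  have h2c : IsClosed (Subtype.val ⁻¹' F₂ : Set ↥(F₁ ∪ F₂)) :=
    h₂.preimage continuous_subtype_val
  have hsub : (sᶜ : Set ↥(F₁ ∪ F₂)) ⊆ Subtype.val ⁻¹' F₂ := by
    intro b hb
    rcases b.2 with hmem | hmem
    · exact absurd hmem hb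
    · exact hmem
  have hfr : ∀ a ∈ frontier s, φ (a : X) = ψ (a : X) := by
    intro a ha
    have has : (a : X) ∈ F₁ := hsc.frontier_subset ha
    have ha2 : a ∈ closure sᶜ := by
      rw [closure_compl]
      exact ha.2
    have : a ∈ Subtype.val ⁻¹' F₂ := h2c.closure_subset ((closure_mono hsub) ha2)
    exact h a ⟨has, this⟩
  have hcont : Continuous (s.piecewise (fun x : ↥(F₁ ∪ F₂) => φ (x : X))
      (fun x : ↥(F₁ ∪ F₂) => ψ (x : X))) :=
    Continuous.piecewise hfr (φ.continuous.comp continuous_subtype_val)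
      (ψ.continuous.comp continuous_subtype_val)
  obtain ⟨χ, hχ⟩ := ContinuousMap.exists_restrict_eq (h₁.union h₂) ⟨_, hcont⟩
  have hχ' : ∀ x : ↥(F₁ ∪ F₂), χ (x : X) =
      s.piecewise (fun x : ↥(F₁ ∪ F₂) => φ (x : X)) (fun x => ψ (x : X)) x := by
    intro x
    exact congrFun (congrArg DFunLike.coe hχ) x
  refine ⟨χ, ?_, ?_⟩
  · intro x hx
    have := hχ' ⟨x, Or.inl hx⟩
    rwa [Set.piecewise_eq_of_mem _ _ _ (by exact hx : (⟨x, Or.inl hx⟩ : ↥(F₁ ∪ F₂)) ∈ s)] at this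
  · intro x hx
    have := hχ' ⟨x, Or.inr hx⟩
    by_cases hx1 : x ∈ F₁
    · rw [Set.piecewise_eq_of_mem _ _ _ (by exact hx1 :
        (⟨x, Or.inr hx⟩ : ↥(F₁ ∪ F₂)) ∈ s)] at this
      rw [this]
      exact h x ⟨hx1, hx⟩
    · rwa [Set.piecewise_eq_of_notMem _ _ _ (by exact hx1 :
        (⟨x, Or.inr hx⟩ : ↥(F₁ ∪ F₂)) ∉ s)] at this

lemma depOn_inter [NormalSpace X] {ν : C(X, ℝ) → ℝ} {F₁ F₂ : Set X}
    (h₁ : IsClosed F₁) (h₂ : IsClosed F₂) (d₁ : DepOn ν F₁) (d₂ : DepOn ν F₂) :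
    DepOn ν (F₁ ∩ F₂) := by
  intro φ ψ h
  obtain ⟨χ, hχ₁, hχ₂⟩ := exists_glue h₁ h₂ φ ψ h
  calc ν φ = ν χ := d₁ φ χ fun x hx => (hχ₁ x hx).symm
    _ = ν ψ := d₂ χ ψ hχ₂

lemma depOn_biInter [NormalSpace X] {ν : C(X, ℝ) → ℝ} {ι : Type*} (Z : ι → Set X)
    (hc : ∀ i, IsClosed (Z i)) (hd : ∀ i, DepOn ν (Z i)) (t : Finset ι) :
    IsClosed (⋂ i ∈ t, Z i) ∧ DepOn ν (⋂ i ∈ t, Z i) := by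
  classical
  induction t using Finset.induction_on with
  | empty =>
    rw [show (⋂ i ∈ (∅ : Finset ι), Z i) = Set.univ by simp]
    exact ⟨isClosed_univ, depOn_univ ν⟩
  | @insert a s _ ih =>
    rw [Finset.set_biInter_insert]
    exact ⟨(hc a).inter ih.1, depOn_inter (hc a) ih.1 (hd a) ih.2⟩

/-- Key lemma: an idempotent probability measure on a compact Hausdorff space depends only
on the values on its support. -/
lemma depOn_suppI {X : Type*} [TopologicalSpace X] [CompactSpace X] [T2Space X]
    {ν : C(X, ℝ) → ℝ} (hν : IsIdemProb ν) : DepOn ν (suppI ν) := by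
  obtain ⟨h0, h1, h2⟩ := hν
  have mono : ∀ φ ψ : C(X, ℝ), φ ≤ ψ → ν φ ≤ ν ψ := by
    intro φ ψ h
    have hsup : φ ⊔ ψ = ψ := sup_eq_right.mpr h
    have := h2 φ ψ
    rw [hsup] at this
    rw [this]
    exact le_max_left _ _
  intro φ ψ h
  have key : ∀ ε : ℝ, 0 < ε → |ν φ - ν ψ| ≤ ε := by
    intro ε hε
    set K : Set X := {x | ε ≤ |φ x - ψ x|} with hK
    have hKc : IsClosed K :=
      isClosed_le continuous_const ((φ.continuous.sub ψ.continuous).abs)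
    have hKcomp : IsCompact K := hKc.isCompact
    -- K is disjoint from the support
    have hdisj : K ∩ ⋂ F : {F : Set X // IsClosed F ∧ DepOn ν F}, (F : Set X) = ∅ := by
      rw [Set.eq_empty_iff_forall_notMem]
      rintro x ⟨hxK, hx⟩
      have hxs : x ∈ suppI ν := by
        rw [suppI_eq, Set.sInter_eq_iInter]
        exact hx
      have := h x hxs
      simp only [hK, Set.mem_setOf_eq, this, sub_self, abs_zero] at hxK
      linarith
    obtain ⟨t, ht⟩ := hKcomp.elim_finite_subfamily_closed
      (fun F : {F : Set X // IsClosed F ∧ DepOn ν F} => (F : Set X))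
      (fun F => F.2.1) hdisj
    set G : Set X := ⋂ F ∈ t, (F : Set X) with hG
    obtain ⟨-, hGd⟩ := depOn_biInter (fun F : {F : Set X // IsClosed F ∧ DepOn ν F} =>
      (F : Set X)) (fun F => F.2.1) (fun F => F.2.2) t
    have hGsmall : ∀ x ∈ G, |φ x - ψ x| < ε := by
      intro x hx
      by_contra hcon
      push_neg at hcon
      have : x ∈ K ∩ ⋂ F ∈ t, (F : Set X) := ⟨hcon, hx⟩
      rw [ht] at this
      exact this
    -- the clamped function
    set χ : C(X, ℝ) := (φ ⊔ (ContinuousMap.const X (-ε) + ψ)) ⊓ (ContinuousMap.const X ε + ψ)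
      with hχ
    have hχG : ∀ x ∈ G, χ x = φ x := by
      intro x hx
      have := hGsmall x hx
      have h1' : ψ x - ε < φ x := by
        have := abs_lt.mp this
        linarith [this.1]
      have h2' : φ x < ψ x + ε := by
        have := abs_lt.mp this
        linarith [this.2]
      simp only [hχ, ContinuousMap.inf_apply, ContinuousMap.sup_apply,
        ContinuousMap.add_apply, ContinuousMap.const_apply]
      rw [max_eq_left (by linarith), min_eq_left (by linarith)]
    have hνχφ : ν χ = ν φ := hGd χ φ hχG
    have hle : χ ≤ ContinuousMap.const X ε + ψ := inf_le_right
    have hge : ContinuousMap.const X (-ε) + ψ ≤ χ := by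
      refine le_inf le_sup_right ?_
      intro x
      simp only [ContinuousMap.toFun_eq_coe, ContinuousMap.add_apply, ContinuousMap.const_apply]
      linarith
    have hub : ν χ ≤ ε + ν ψ := by
      have := mono _ _ hle
      rwa [h1 ε ψ] at this
    have hlb : -ε + ν ψ ≤ ν χ := by
      have := mono _ _ hge
      rwa [h1 (-ε) ψ] at this
    rw [abs_le]
    constructor <;> [skip; skip] <;> linarith [hνχφ ▸ hub, hνχφ ▸ hlb]
  have : |ν φ - ν ψ| ≤ 0 := by
    refine le_of_forall_pos_le_add ?_
    intro ε hε
    simpa using key ε hε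
  have := abs_nonpos_iff.mp this
  linarith [sub_eq_zero.mp this, this]

end Aux

theorem I_compl_eq_and_SI_open {X : Type*} [TopologicalSpace X] [CompactSpace X] [T2Space X]
    (U : Set X) (hU : IsOpen U) :
    {μ : IPM X | suppI μ.1 ⊆ Uᶜ} = (SI U)ᶜ ∧ IsOpen (SI U) := by
  constructor
  · ext μ
    simp [SI, Set.subset_compl_iff_disjoint_right, Set.disjoint_iff_inter_eq_empty,
      Set.not_nonempty_iff_eq_empty]
  · rw [isOpen_iff_forall_mem_open]
    rintro μ ⟨x, hxs, hxU⟩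
    -- Uᶜ is not a "dependence set" for μ
    have hnotdep : ¬ DepOn μ.1 Uᶜ := by
      intro hdep
      have : suppI μ.1 ⊆ Uᶜ := Set.sInter_subset_of_mem ⟨hU.isClosed_compl, hdep⟩
      exact this hxs hxU
    rw [DepOn] at hnotdep
    push_neg at hnotdep
    obtain ⟨φ, ψ, hagree, hne⟩ := hnotdep
    refine ⟨{ν : IPM X | ν.1 φ ≠ ν.1 ψ}, ?_, ?_, hne⟩
    · intro ν hν
      by_contra hcon
      rw [SI, Set.mem_setOf_eq, Set.not_nonempty_iff_eq_empty,
        ← Set.disjoint_iff_inter_eq_empty, ← Set.subset_compl_iff_disjoint_right] at hcon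
      exact hν (depOn_suppI ν.2 φ ψ fun y hy => hagree y (hcon hy))
    · have hc1 : Continuous fun ν : IPM X => ν.1 φ :=
        (continuous_apply φ).comp continuous_subtype_val
      have hc2 : Continuous fun ν : IPM X => ν.1 ψ :=
        (continuous_apply ψ).comp continuous_subtype_val
      have : IsClosed {ν : IPM X | ν.1 φ = ν.1 ψ} := isClosed_eq hc1 hc2
      exact this.isOpen_compl
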